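/- Let α ≥ 0 and 0 < x ≤ δ ≤ 1 be real numbers. Then (x^(α+1)/(2δ) - x^(α-1)·δ/2 + x^α·ln δ) ≤ (x^(α+1/2)/√δ - x^(α-1/2)·√δ + x^α·ln δ) ≤ x^α·ln x ≤ (ln δ + 4 - 8√δ/(√x + √δ))·x^α ≤ (ln δ + 2(1 - 2δ/(x+δ)))·x^α. -/

import Mathlib

lemma aux_hdA {t : ℝ} (ht : 0 < t) :
    HasDerivAt (fun u : ℝ => 2*(u-1)/(u+1) - Real.log u) (4/(t+1)^2 - 1/t) t := by
  have h1 : HasDerivAt (fun u : ℝ => 2*(u-1)) 2 t := by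
    simpa using ((hasDerivAt_id t).sub_const 1).const_mul 2
  have h2 : HasDerivAt (fun u : ℝ => u+1) 1 t := (hasDerivAt_id t).add_const 1
  have h3 := h1.div h2 (by positivity)
  have h4 := Real.hasDerivAt_log ht.ne'
  exact (h3.sub h4).congr_deriv (by ring)

lemma aux_hdB {t : ℝ} (ht : 0 < t) :
    HasDerivAt (fun u : ℝ => 2 * Real.log u - u + u⁻¹) (2/t - 1 + -(t^2)⁻¹) t := by
  have h1 := (Real.hasDerivAt_log ht.ne').const_mul 2
  have h2 := hasDerivAt_id t
  have h3 := hasDerivAt_inv ht.ne'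
  exact ((h1.sub h2).add h3).congr_deriv (by ring)

lemma logA {s : ℝ} (hs : 0 < s) (h1 : s ≤ 1) : Real.log s ≤ 2*(s-1)/(s+1) := by
  have anti : AntitoneOn (fun u : ℝ => 2*(u-1)/(u+1) - Real.log u) (Set.Ioi 0) := by
    apply antitoneOn_of_deriv_nonpos (convex_Ioi 0)
    · intro t ht
      exact ((aux_hdA (Set.mem_Ioi.mp ht)).differentiableAt.continuousAt).continuousWithinAt
    · rw [interior_Ioi]
      intro t ht
      exact (aux_hdA (Set.mem_Ioi.mp ht)).differentiableAt.differentiableWithinAt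
    · rw [interior_Ioi]
      intro t ht
      have ht' : (0:ℝ) < t := ht
      rw [(aux_hdA ht').deriv]
      rw [sub_nonpos, div_le_div_iff₀ (by positivity) ht']
      nlinarith [sq_nonneg (t-1)]
  have h := anti (Set.mem_Ioi.mpr hs) (Set.mem_Ioi.mpr one_pos) h1
  simp only [Real.log_one] at h
  norm_num at h
  linarith

lemma logB {s : ℝ} (hs : 0 < s) (h1 : s ≤ 1) : s - s⁻¹ ≤ 2 * Real.log s := by
  have anti : AntitoneOn (fun u : ℝ => 2 * Real.log u - u + u⁻¹) (Set.Ioi 0) := by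
    apply antitoneOn_of_deriv_nonpos (convex_Ioi 0)
    · intro t ht
      exact ((aux_hdB (Set.mem_Ioi.mp ht)).differentiableAt.continuousAt).continuousWithinAt
    · rw [interior_Ioi]
      intro t ht
      exact (aux_hdB (Set.mem_Ioi.mp ht)).differentiableAt.differentiableWithinAt
    · rw [interior_Ioi]
      intro t ht
      have ht' : (0:ℝ) < t := ht
      rw [(aux_hdB ht').deriv]
      have htne := ht'.ne'
      have e : 2/t - 1 + -(t^2)⁻¹ = -((t-1)^2/t^2) := by
        field_simp
        ring
      rw [e, neg_nonpos]
      positivity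
  have h := anti (Set.mem_Ioi.mpr hs) (Set.mem_Ioi.mpr one_pos) h1
  simp only [Real.log_one] at h
  norm_num at h
  linarith

theorem stmt_7 (x δ α : ℝ) (hα : 0 ≤ α) (hx0 : 0 < x) (hx : x ≤ δ) (hδ : δ ≤ 1) :
    x ^ (α + 1) / (2 * δ) - x ^ (α - 1) * δ / 2 + x ^ α * Real.log δ
        ≤ x ^ (α + 1 / 2) / Real.sqrt δ - x ^ (α - 1 / 2) * Real.sqrt δ + x ^ α * Real.log δ ∧
      x ^ (α + 1 / 2) / Real.sqrt δ - x ^ (α - 1 / 2) * Real.sqrt δ + x ^ α * Real.log δ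
        ≤ x ^ α * Real.log x ∧
      x ^ α * Real.log x
        ≤ (Real.log δ + 4 - 8 * Real.sqrt δ / (Real.sqrt x + Real.sqrt δ)) * x ^ α ∧
      (Real.log δ + 4 - 8 * Real.sqrt δ / (Real.sqrt x + Real.sqrt δ)) * x ^ α
        ≤ (Real.log δ + 2 * (1 - 2 * δ / (x + δ))) * x ^ α := by
  have hδ0 : 0 < δ := lt_of_lt_of_le hx0 hx
  set p := Real.sqrt x with hpdef
  set q := Real.sqrt δ with hqdef
  have hp : 0 < p := Real.sqrt_pos.mpr hx0
  have hq : 0 < q := Real.sqrt_pos.mpr hδ0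
  have hpq : p ≤ q := Real.sqrt_le_sqrt hx
  have hq1 : q ≤ 1 := Real.sqrt_le_one.mpr hδ
  have hx2 : p ^ 2 = x := Real.sq_sqrt hx0.le
  have hδ2 : q ^ 2 = δ := Real.sq_sqrt hδ0.le
  have ha : 0 < x ^ α := Real.rpow_pos_of_pos hx0 α
  have e1 : x ^ (α + 1) = x ^ α * x := by
    rw [Real.rpow_add hx0, Real.rpow_one]
  have e2 : x ^ (α - 1) = x ^ α / x := by
    rw [Real.rpow_sub hx0, Real.rpow_one]
  have e3 : x ^ (α + 1/2) = x ^ α * p := by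
    rw [Real.rpow_add hx0, hpdef, Real.sqrt_eq_rpow]
  have e4 : x ^ (α - 1/2) = x ^ α / p := by
    rw [Real.rpow_sub hx0, hpdef, Real.sqrt_eq_rpow]
  have lnx : Real.log x = 2 * Real.log p := by
    rw [hpdef, Real.log_sqrt hx0.le]; ring
  have lnδ : Real.log δ = 2 * Real.log q := by
    rw [hqdef, Real.log_sqrt hδ0.le]; ring
  have hsq : 0 < p / q := by positivity
  have hsq1 : p / q ≤ 1 := (div_le_one hq).mpr hpq
  refine ⟨?_, ?_, ?_, ?_⟩
  · -- first inequality
    rw [e1, e2, e3, e4]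
    have K1 : x / (2 * δ) - δ / x / 2 ≤ p / q - q / p := by
      rw [← hx2, ← hδ2]
      have expand : p / q - q / p - (p ^ 2 / (2 * q ^ 2) - q ^ 2 / p ^ 2 / 2)
          = ((q ^ 2 - p ^ 2) * (p - q) ^ 2) / (2 * p ^ 2 * q ^ 2) := by
        field_simp
        ring
      have hnum : 0 ≤ ((q ^ 2 - p ^ 2) * (p - q) ^ 2) / (2 * p ^ 2 * q ^ 2) :=
        div_nonneg (mul_nonneg (by nlinarith) (sq_nonneg _)) (by positivity)
      linarith [expand ▸ hnum]
    calc x ^ α * x / (2 * δ) - x ^ α / x * δ / 2 + x ^ α * Real.log δ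
        = x ^ α * (x / (2 * δ) - δ / x / 2) + x ^ α * Real.log δ := by ring
      _ ≤ x ^ α * (p / q - q / p) + x ^ α * Real.log δ := by
          have := mul_le_mul_of_nonneg_left K1 ha.le
          linarith
      _ = x ^ α * p / q - x ^ α / p * q + x ^ α * Real.log δ := by ring
  · rw [e3, e4]
    have K2 : p / q - q / p + Real.log δ ≤ Real.log x := by
      have hlog := logB hsq hsq1
      rw [Real.log_div hp.ne' hq.ne', inv_div] at hlog
      linarith
    calc x ^ α * p / q - x ^ α / p * q + x ^ α * Real.log δ
        = x ^ α * (p / q - q / p + Real.log δ) := by ring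
      _ ≤ x ^ α * Real.log x := mul_le_mul_of_nonneg_left K2 ha.le
  · have K3 : Real.log x ≤ Real.log δ + 4 - 8 * q / (p + q) := by
      have hlog := logA hsq hsq1
      rw [Real.log_div hp.ne' hq.ne'] at hlog
      have id1 : 2 * (2 * (p / q - 1) / (p / q + 1)) = 4 - 8 * q / (p + q) := by
        have hpq0 : p + q ≠ 0 := by positivity
        field_simp
        ring
      linarith
    calc x ^ α * Real.log x ≤ x ^ α * (Real.log δ + 4 - 8 * q / (p + q)) :=
          mul_le_mul_of_nonneg_left K3 ha.le
      _ = (Real.log δ + 4 - 8 * q / (p + q)) * x ^ α := by ring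
  · have K4 : 4 - 8 * q / (p + q) ≤ 2 * (1 - 2 * δ / (x + δ)) := by
      rw [← hx2, ← hδ2]
      have expand : 2 * (1 - 2 * q ^ 2 / (p ^ 2 + q ^ 2)) - (4 - 8 * q / (p + q))
          = (2 * (q - p) ^ 3) / ((p + q) * (p ^ 2 + q ^ 2)) := by
        have h1 : p + q ≠ 0 := by positivity
        have h2 : p ^ 2 + q ^ 2 ≠ 0 := by positivity
        field_simp
        ring
      have hnum : 0 ≤ (2 * (q - p) ^ 3) / ((p + q) * (p ^ 2 + q ^ 2)) :=
        div_nonneg (by nlinarith [sq_nonneg (q - p)]) (by positivity)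
      linarith [expand ▸ hnum]
    have := mul_le_mul_of_nonneg_right K4 ha.le
    nlinarith [this]
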